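/- Let X be a compact metric space and B an open subset of X. If for every k ≥ 1 there exist k pairwise disjoint clopen subsets of X each intersecting B, then there exist infinitely many pairwise disjoint clopen subsets of X each intersecting B. -/

import Mathlib

/-- If for every `k ≥ 1` there are `k` pairwise disjoint clopen subsets
of a compact metric space `X` each intersecting the open set `B`, then there are
infinitely many pairwise disjoint clopen subsets of `X` each intersecting `B`. -/
theorem stmt_2 {X : Type*} [MetricSpace X] [CompactSpace X] (B : Set X) (hB : IsOpen B)
    (h : ∀ k : ℕ, 1 ≤ k → ∃ C : Fin k → Set X, (∀ i, IsClopen (C i)) ∧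
      Pairwise (Function.onFun Disjoint C) ∧ ∀ i, (C i ∩ B).Nonempty) :
    ∃ C : ℕ → Set X, (∀ i, IsClopen (C i)) ∧ Pairwise (Function.onFun Disjoint C) ∧
      ∀ i, (C i ∩ B).Nonempty := by
  classical
  set P : Set X → Prop := fun S => ∀ k : ℕ, 1 ≤ k → ∃ C : Fin k → Set X,
    (∀ i, IsClopen (C i) ∧ C i ⊆ S) ∧ Pairwise (Function.onFun Disjoint C) ∧
    ∀ i, (C i ∩ B).Nonempty with hP
  have hPuniv : P Set.univ := by
    intro k hk
    obtain ⟨C, h1, h2, h3⟩ := h k hk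
    exact ⟨C, fun i => ⟨h1 i, Set.subset_univ _⟩, h2, h3⟩
  have key : ∀ S : Set X, P S →
      ∃ U : Set X, IsClopen U ∧ (U ∩ B).Nonempty ∧ U ⊆ S ∧ P (S \ U) := by
    intro S hS
    by_contra hcon
    push_neg at hcon
    obtain ⟨C, hC1, hC2, hC3⟩ := hS 2 (by norm_num)
    have hnot : ∀ i : Fin 2, ¬ P (S \ C i) :=
      fun i => hcon (C i) (hC1 i).1 (hC3 i) (hC1 i).2
    have hex : ∀ i : Fin 2, ∃ k : ℕ, 1 ≤ k ∧ ∀ D : Fin k → Set X,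
        ¬ ((∀ j, IsClopen (D j) ∧ D j ⊆ S \ C i) ∧ Pairwise (Function.onFun Disjoint D) ∧
          ∀ j, (D j ∩ B).Nonempty) := by
      intro i
      have := hnot i
      simp only [hP] at this
      push_neg at this
      obtain ⟨k, hk1, hk2⟩ := this
      refine ⟨k, hk1, fun D hD => ?_⟩
      obtain ⟨j, hj⟩ := hk2 D hD.1 hD.2.1
      exact Set.nonempty_iff_ne_empty.mp (hD.2.2 j) hj
    obtain ⟨k0, hk0, H0⟩ := hex 0
    obtain ⟨k1, hk1, H1⟩ := hex 1
    obtain ⟨D, hD1, hD2, hD3⟩ := hS (k0 + k1) (by omega)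
    choose x hx using hD3
    set A : Finset (Fin (k0 + k1)) := Finset.univ.filter (fun i => x i ∈ C 0) with hA
    have hcard : A.card + Aᶜ.card = k0 + k1 := by
      rw [Finset.card_add_card_compl, Fintype.card_fin]
    -- helper to derive a contradiction from a large set of indices avoiding C m
    have main : ∀ (m : Fin 2) (k : ℕ) (s : Finset (Fin (k0 + k1))),
        s.card = k → (∀ i ∈ s, x i ∉ C m) →
        ∃ E : Fin k → Set X, (∀ j, IsClopen (E j) ∧ E j ⊆ S \ C m) ∧
          Pairwise (Function.onFun Disjoint E) ∧ ∀ j, (E j ∩ B).Nonempty := by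
      intro m k s hs hxs
      set f : Fin k → Fin (k0 + k1) := fun j => (s.orderIsoOfFin hs j : Fin (k0 + k1))
        with hf
      have hfinj : Function.Injective f := by
        intro a b hab
        exact (s.orderIsoOfFin hs).injective (Subtype.ext hab)
      have hfmem : ∀ j, f j ∈ s := fun j => (s.orderIsoOfFin hs j).2
      refine ⟨fun j => D (f j) \ C m, ?_, ?_, ?_⟩
      · intro j
        refine ⟨(hD1 (f j)).1.diff (hC1 m).1, ?_⟩
        exact Set.diff_subset_diff_left (hD1 (f j)).2
      · intro a b hab
        have := hD2 (fun hh => hab (hfinj hh))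
        exact this.mono Set.diff_subset Set.diff_subset
      · intro j
        exact ⟨x (f j), ⟨(hx (f j)).1, hxs _ (hfmem j)⟩, (hx (f j)).2⟩
    rcases le_or_gt k0 Aᶜ.card with hge | hlt
    · obtain ⟨t, hts, htc⟩ := Finset.exists_subset_card_eq hge
      have hxs : ∀ i ∈ t, x i ∉ C 0 := by
        intro i hi
        have : i ∈ Aᶜ := hts hi
        simpa [hA] using this
      obtain ⟨E, hE⟩ := main 0 k0 t htc hxs
      exact H0 E hE
    · have hge1 : k1 ≤ A.card := by omega
      obtain ⟨t, hts, htc⟩ := Finset.exists_subset_card_eq hge1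
      have hxs : ∀ i ∈ t, x i ∉ C 1 := by
        intro i hi hmem
        have hiA : i ∈ A := hts hi
        have hxi : x i ∈ C 0 := by simpa [hA] using hiA
        have hdisj : Disjoint (C 0) (C 1) := hC2 (by decide)
        exact (Set.disjoint_left.mp hdisj hxi) hmem
      obtain ⟨E, hE⟩ := main 1 k1 t htc hxs
      exact H1 E hE
  choose U hU1 hU2 hU3 hU4 using key
  let T : ℕ → {S : Set X // P S} := fun n =>
    Nat.rec ⟨Set.univ, hPuniv⟩ (fun _ p => ⟨p.1 \ U p.1 p.2, hU4 p.1 p.2⟩) n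
  set V : ℕ → Set X := fun n => U (T n).1 (T n).2 with hV
  have hstep : ∀ n, (T (n+1)).1 = (T n).1 \ V n := fun n => rfl
  have hmono : ∀ n m, m ≤ n → (T n).1 ⊆ (T m).1 := by
    intro n
    induction n with
    | zero =>
      intro m hm
      have : m = 0 := by omega
      subst this; exact subset_rfl
    | succ n ih =>
      intro m hm
      rcases Nat.lt_or_ge m (n+1) with h' | h'
      · exact (Set.diff_subset (s := (T n).1) (t := V n)).trans (ih m (by omega))
      · have : m = n + 1 := by omega
        subst this; exact subset_rfl
  have hdisj : ∀ m n, m < n → Disjoint (V m) (V n) := by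
    intro m n hmn
    have h1 : V n ⊆ (T n).1 := hU3 _ _
    have h2 : (T n).1 ⊆ (T (m+1)).1 := hmono n (m+1) (by omega)
    have h3 : (T (m+1)).1 = (T m).1 \ V m := hstep m
    have : V n ⊆ (T m).1 \ V m := h1.trans (h2.trans_eq h3)
    exact Set.disjoint_of_subset_right this Set.disjoint_sdiff_right
  refine ⟨V, fun n => hU1 _ _, ?_, fun n => hU2 _ _⟩
  intro m n hmn
  rcases lt_or_gt_of_ne hmn with h' | h'
  · exact hdisj m n h'
  · exact (hdisj n m h').symm
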